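/- DPO aligns policy log-odds with utilities: let Y be a finite type with at least two elements, U : Y → ℝ a utility, λ > 0, β > 0, π_ref : Y → ℝ a strictly positive reference policy, and w(y, y') > 0 weights for all ordered pairs y ≠ y'. Define preference probabilities p(y, y') = σ(λ(U(y) − U(y'))) with σ(t) = 1/(1+e^{−t}), and for strictly positive π : Y → ℝ define the DPO objective L(π) = ∑_{y ≠ y'} w(y, y') · [ −p(y, y')·log σ(β(h(y) − h(y'))) − (1 − p(y, y'))·log σ(−β(h(y) − h(y'))) ], where h(y) = log π(y) − log π_ref(y). Then π*(y) = π_ref(y)·exp((λ/β)·U(y)) minimizes L, and every minimizer π of L satisfies, for all y, y': log π(y) − log π(y') = (λ/β)·(U(y) − U(y')) + (log π_ref(y) − log π_ref(y')). -/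

import Mathlib

/-- The standard logistic sigmoid `σ(t) = 1/(1 + e^{−t})`. -/
noncomputable def logistic (t : ℝ) : ℝ := 1 / (1 + Real.exp (-t))

/-- The DPO objective: the weighted sum, over ordered pairs `y ≠ y'`, of the
Bradley–Terry cross-entropy between target preference probabilities `p y y'` and
the model's implied preference probabilities `σ(β(h y − h y'))`, where
`h y = log π y − log π_ref y` is the log-ratio of the learned policy to the fixed
reference policy. -/
lemma logistic_pos (t : ℝ) : 0 < logistic t := by
  unfold logistic; positivity

lemma logistic_lt_one (t : ℝ) : logistic t < 1 := by
  unfold logistic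
  rw [div_lt_one (by positivity)]
  linarith [Real.exp_pos (-t)]

lemma logistic_neg (t : ℝ) : logistic (-t) = 1 - logistic t := by
  unfold logistic
  rw [neg_neg]
  have h1 : (0:ℝ) < 1 + Real.exp (-t) := by positivity
  have h2 : (0:ℝ) < 1 + Real.exp t := by positivity
  have he : Real.exp t * Real.exp (-t) = 1 := by
    rw [← Real.exp_add]; simp
  field_simp
  nlinarith [he]

lemma logistic_injective : Function.Injective logistic := by
  intro a b h
  unfold logistic at h
  have ha : (0:ℝ) < 1 + Real.exp (-a) := by positivity
  have hb : (0:ℝ) < 1 + Real.exp (-b) := by positivity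
  rw [div_eq_div_iff ha.ne' hb.ne'] at h
  have he : Real.exp (-a) = Real.exp (-b) := by linarith
  have := Real.exp_injective he
  linarith

lemma bt_lt (q x x₀ : ℝ) (hq0 : 0 < q) (hq1 : q < 1) (h : logistic x₀ = q)
    (hne : x ≠ x₀) :
    -q * Real.log (logistic x₀) - (1 - q) * Real.log (logistic (-x₀)) <
      -q * Real.log (logistic x) - (1 - q) * Real.log (logistic (-x)) := by
  set t := logistic x with ht
  have ht0 : 0 < t := logistic_pos x
  have ht1 : t < 1 := logistic_lt_one x
  have htq : t ≠ q := fun h' => hne (logistic_injective (h'.trans h.symm))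
  rw [logistic_neg, logistic_neg, h]
  have e1 : q * Real.log t - q * Real.log q < t - q := by
    have h1 : Real.log t - Real.log q < t / q - 1 := by
      rw [← Real.log_div ht0.ne' hq0.ne']
      refine Real.log_lt_sub_one_of_pos (div_pos ht0 hq0) ?_
      intro hcon
      apply htq
      field_simp at hcon
      linarith
    have h2 := (mul_lt_mul_iff_right₀ hq0).mpr h1
    have hqq : q * (t / q - 1) = t - q := by field_simp
    calc q * Real.log t - q * Real.log q = q * (Real.log t - Real.log q) := by ring
      _ < q * (t / q - 1) := h2
      _ = t - q := hqq
  have e2 : (1 - q) * Real.log (1 - t) - (1 - q) * Real.log (1 - q) ≤ q - t := by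
    have h1 : Real.log (1 - t) - Real.log (1 - q) ≤ (1 - t) / (1 - q) - 1 := by
      rw [← Real.log_div (by linarith) (by linarith : (1:ℝ) - q ≠ 0)]
      exact Real.log_le_sub_one_of_pos (div_pos (by linarith) (by linarith))
    have h2 := (mul_le_mul_iff_right₀ (by linarith : (0:ℝ) < 1 - q)).mpr h1
    have hqq : (1 - q) * ((1 - t) / (1 - q) - 1) = q - t := by
      have hq' : (1:ℝ) - q ≠ 0 := by linarith
      field_simp
      ring
    calc (1-q) * Real.log (1-t) - (1-q) * Real.log (1-q)
        = (1-q) * (Real.log (1-t) - Real.log (1-q)) := by ring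
      _ ≤ (1-q) * ((1-t)/(1-q) - 1) := h2
      _ = q - t := hqq
  linarith

lemma bt_le (q x x₀ : ℝ) (hq0 : 0 < q) (hq1 : q < 1) (h : logistic x₀ = q) :
    -q * Real.log (logistic x₀) - (1 - q) * Real.log (logistic (-x₀)) ≤
      -q * Real.log (logistic x) - (1 - q) * Real.log (logistic (-x)) := by
  rcases eq_or_ne x x₀ with rfl | hne
  · exact le_refl _
  · exact (bt_lt q x x₀ hq0 hq1 h hne).le

noncomputable def dpoLoss {Y : Type*} [Fintype Y] [DecidableEq Y]
    (w p : Y → Y → ℝ) (β : ℝ) (πref π : Y → ℝ) : ℝ :=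
  ∑ y : Y, ∑ y' : Y,
    if y = y' then 0 else
      w y y' *
        (-(p y y') *
            Real.log (logistic (β * ((Real.log (π y) - Real.log (πref y)) -
              (Real.log (π y') - Real.log (πref y'))))) -
          (1 - p y y') *
            Real.log (logistic (-(β * ((Real.log (π y) - Real.log (πref y)) -
              (Real.log (π y') - Real.log (πref y')))))))

/-- **DPO aligns policy log-odds with utilities.** Let `Y` be a finite type with at
least two elements, `U : Y → ℝ` a utility, `λ, β > 0`, `π_ref` a strictly positive
reference policy, and `w y y' > 0` weights for ordered pairs `y ≠ y'`.  With
Bradley–Terry preference probabilities `p y y' = σ(λ(U y − U y'))`, the policy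
`π* y = π_ref y · exp((λ/β)·U y)` minimizes the DPO objective over strictly
positive policies, and every minimizer `π` satisfies, for all `y, y'`:
`log π y − log π y' = (λ/β)(U y − U y') + (log π_ref y − log π_ref y')`. -/
theorem dpo_aligns_log_odds_with_utilities
    {Y : Type*} [Fintype Y] [DecidableEq Y] (hY : 2 ≤ Fintype.card Y)
    (U : Y → ℝ) (lam β : ℝ) (hlam : 0 < lam) (hβ : 0 < β)
    (πref : Y → ℝ) (hπref : ∀ y, 0 < πref y)
    (w : Y → Y → ℝ) (hw : ∀ y y', y ≠ y' → 0 < w y y')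
    (p : Y → Y → ℝ) (hp : ∀ y y', p y y' = logistic (lam * (U y - U y'))) :
    (∀ π : Y → ℝ, (∀ y, 0 < π y) →
      dpoLoss w p β πref (fun y => πref y * Real.exp ((lam / β) * U y)) ≤
        dpoLoss w p β πref π) ∧
    (∀ π : Y → ℝ, (∀ y, 0 < π y) →
      (∀ π' : Y → ℝ, (∀ y, 0 < π' y) → dpoLoss w p β πref π ≤ dpoLoss w p β πref π') →
      ∀ y y' : Y, Real.log (π y) - Real.log (π y') =
        (lam / β) * (U y - U y') + (Real.log (πref y) - Real.log (πref y'))) := by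
  
  have hβ' : β ≠ 0 := hβ.ne'
  set πs : Y → ℝ := fun y => πref y * Real.exp ((lam / β) * U y) with hπs_def
  have hπs : ∀ y, 0 < πs y := fun y => mul_pos (hπref y) (Real.exp_pos _)
  have hlogπs : ∀ y, Real.log (πs y) = Real.log (πref y) + (lam / β) * U y := by
    intro y
    rw [hπs_def]
    rw [Real.log_mul (hπref y).ne' (Real.exp_pos _).ne', Real.log_exp]
  -- the argument of logistic for the optimal policy
  have hXs : ∀ y y' : Y,
      β * ((Real.log (πs y) - Real.log (πref y)) - (Real.log (πs y') - Real.log (πref y')))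
        = lam * (U y - U y') := by
    intro y y'
    rw [hlogπs, hlogπs]
    field_simp
    ring
  have hp0 : ∀ y y', 0 < p y y' := by intro y y'; rw [hp]; exact logistic_pos _
  have hp1 : ∀ y y', p y y' < 1 := by intro y y'; rw [hp]; exact logistic_lt_one _
  have hlog : ∀ y y', logistic (β * ((Real.log (πs y) - Real.log (πref y)) -
      (Real.log (πs y') - Real.log (πref y')))) = p y y' := by
    intro y y'
    rw [hXs, hp]
  -- termwise comparison
  have hterm_le : ∀ (π : Y → ℝ) (y y' : Y),
      (if y = y' then (0:ℝ) else
        w y y' *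
          (-(p y y') *
              Real.log (logistic (β * ((Real.log (πs y) - Real.log (πref y)) -
                (Real.log (πs y') - Real.log (πref y'))))) -
            (1 - p y y') *
              Real.log (logistic (-(β * ((Real.log (πs y) - Real.log (πref y)) -
                (Real.log (πs y') - Real.log (πref y')))))))) ≤
      (if y = y' then (0:ℝ) else
        w y y' *
          (-(p y y') *
              Real.log (logistic (β * ((Real.log (π y) - Real.log (πref y)) -
                (Real.log (π y') - Real.log (πref y'))))) -
            (1 - p y y') *
              Real.log (logistic (-(β * ((Real.log (π y) - Real.log (πref y)) -
                (Real.log (π y') - Real.log (πref y')))))))) := by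
    intro π y y'
    by_cases hyy : y = y'
    · simp [hyy]
    · simp only [if_neg hyy]
      refine mul_le_mul_of_nonneg_left ?_ (hw y y' hyy).le
      exact bt_le (p y y') _ _ (hp0 y y') (hp1 y y') (hlog y y')
  have part1 : ∀ π : Y → ℝ, (∀ y, 0 < π y) →
      dpoLoss w p β πref πs ≤ dpoLoss w p β πref π := by
    intro π hπ
    unfold dpoLoss
    exact Finset.sum_le_sum fun y _ => Finset.sum_le_sum fun y' _ => hterm_le π y y'
  refine ⟨part1, ?_⟩
  intro π hπ hmin y y'
  by_cases hyy : y = y'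
  · subst hyy; simp
  -- key claim: the logistic argument matches
  have hkey : β * ((Real.log (π y) - Real.log (πref y)) -
      (Real.log (π y') - Real.log (πref y'))) = lam * (U y - U y') := by
    by_contra hne
    have hne' : β * ((Real.log (π y) - Real.log (πref y)) -
        (Real.log (π y') - Real.log (πref y'))) ≠
        β * ((Real.log (πs y) - Real.log (πref y)) -
        (Real.log (πs y') - Real.log (πref y'))) := by
      rw [hXs]; exact hne
    have hstrict : dpoLoss w p β πref πs < dpoLoss w p β πref π := by
      unfold dpoLoss
      refine Finset.sum_lt_sum (fun a _ => Finset.sum_le_sum fun b _ => hterm_le π a b)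
        ⟨y, Finset.mem_univ y, ?_⟩
      refine Finset.sum_lt_sum (fun b _ => hterm_le π y b) ⟨y', Finset.mem_univ y', ?_⟩
      simp only [if_neg hyy]
      refine (mul_lt_mul_iff_right₀ (hw y y' hyy)).mpr ?_
      exact bt_lt (p y y') _ _ (hp0 y y') (hp1 y y') (hlog y y') hne'
    exact absurd (hmin πs hπs) (not_le.mpr hstrict)
  have : (Real.log (π y) - Real.log (πref y)) - (Real.log (π y') - Real.log (πref y'))
      = (lam / β) * (U y - U y') := by
    field_simp
    linarith [hkey]
  linarith [this]
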